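/- Let d ≥ 1, let P_1, …, P_N ⊆ ℝ^d be pairwise disjoint finite color classes, and let m ≥ 1. For i = 1, …, d+1, let C_i ⊆ P_1 ∪ … ∪ P_N be a set with |C_i| ≤ d+1, 0 ∈ conv(C_i), and |C_i ∩ P_j| ≤ m for every j (i.e., each C_i is an m-colorful choice). Assume additionally that every color class intersects at most one of the sets C_1, …, C_{d+1}, i.e., for every j there is at most one index i with C_i ∩ P_j ≠ ∅. Then there exists a set C ⊆ C_1 ∪ … ∪ C_{d+1} with 0 ∈ conv(C) and |C ∩ P_j| ≤ ⌈m/2⌉ for every j. -/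

import Mathlib

open scoped Classical

/-- Combining `d + 1` `m`-colorful choices (with respect to pairwise disjoint
color classes `P 1, …, P N`), each of size at most `d + 1`, each containing
the origin in its convex hull, and such that every color class meets at most
one of them, yields an `⌈m/2⌉`-colorful choice containing the origin in its
convex hull. -/
theorem combine_colorful_choices (d N : ℕ) (hd : 1 ≤ d) (m : ℕ) (hm : 1 ≤ m)
    (P : Fin N → Finset (EuclideanSpace ℝ (Fin d)))
    (hdisj : ∀ j j', j ≠ j' → Disjoint (P j) (P j'))
    (C : Fin (d + 1) → Finset (EuclideanSpace ℝ (Fin d)))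
    (hsub : ∀ i, C i ⊆ Finset.univ.biUnion P)
    (hcard : ∀ i, (C i).card ≤ d + 1)
    (h0 : ∀ i, (0 : EuclideanSpace ℝ (Fin d)) ∈
      convexHull ℝ ((C i : Set (EuclideanSpace ℝ (Fin d)))))
    (hm' : ∀ i j, (C i ∩ P j).card ≤ m)
    (hone : ∀ (j : Fin N) (i i' : Fin (d + 1)),
      (C i ∩ P j).Nonempty → (C i' ∩ P j).Nonempty → i = i') :
    ∃ D : Finset (EuclideanSpace ℝ (Fin d)),
      D ⊆ Finset.univ.biUnion C ∧
      (0 : EuclideanSpace ℝ (Fin d)) ∈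
        convexHull ℝ ((D : Set (EuclideanSpace ℝ (Fin d)))) ∧
      ∀ j, (D ∩ P j).card ≤ (m + 1) / 2 := by
  -- weights witnessing 0 ∈ conv (C i)
  have hW : ∀ i, ∃ w : (EuclideanSpace ℝ (Fin d)) → ℝ, (∀ y ∈ C i, 0 ≤ w y) ∧ (∑ y ∈ C i, w y = 1) ∧
      (∑ y ∈ C i, w y • y = 0) := by
    intro i
    simpa using (Finset.mem_convexHull').1 (h0 i)
  choose w hw0 hw1 hws using hW
  -- halves of each color class inside each C i
  have hH : ∀ i j, ∃ t ⊆ C i ∩ P j, t.card = (C i ∩ P j).card / 2 := fun i j =>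
    Finset.exists_subset_card_eq (Nat.div_le_self _ _)
  choose H hHsub hHcard using hH
  set A : Fin (d + 1) → Finset (EuclideanSpace ℝ (Fin d)) := fun i => Finset.univ.biUnion (H i) with hA
  have hAsub : ∀ i, A i ⊆ C i := by
    intro i p hp
    rcases Finset.mem_biUnion.1 hp with ⟨j, -, hpj⟩
    exact (Finset.mem_inter.1 (hHsub i j hpj)).1
  set B : Fin (d + 1) → Finset (EuclideanSpace ℝ (Fin d)) := fun i => C i \ A i with hB
  -- A i ∩ P j = H i j
  have hAj : ∀ i j, A i ∩ P j = H i j := by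
    intro i j
    ext p
    constructor
    · intro hp
      rcases Finset.mem_inter.1 hp with ⟨hpA, hpP⟩
      rcases Finset.mem_biUnion.1 hpA with ⟨j', -, hpj'⟩
      have hpP' : p ∈ P j' := (Finset.mem_inter.1 (hHsub i j' hpj')).2
      have : j = j' := by
        by_contra hne
        exact Finset.disjoint_left.1 (hdisj j j' hne) hpP hpP'
      exact this ▸ hpj'
    · intro hp
      exact Finset.mem_inter.2 ⟨Finset.mem_biUnion.2 ⟨j, Finset.mem_univ j, hp⟩,
        (Finset.mem_inter.1 (hHsub i j hp)).2⟩
  have hBj : ∀ i j, B i ∩ P j = (C i ∩ P j) \ H i j := by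
    intro i j
    ext p
    simp only [hB, Finset.mem_inter, Finset.mem_sdiff]
    constructor
    · rintro ⟨⟨hC, hA'⟩, hP⟩
      refine ⟨⟨hC, hP⟩, fun hH' => hA' ?_⟩
      exact Finset.mem_biUnion.2 ⟨j, Finset.mem_univ j, hH'⟩
    · rintro ⟨⟨hC, hP⟩, hH'⟩
      refine ⟨⟨hC, fun hA' => hH' ?_⟩, hP⟩
      have : p ∈ A i ∩ P j := Finset.mem_inter.2 ⟨hA', hP⟩
      rw [hAj i j] at this; exact this
  -- cardinality bounds per color for A and B
  have hAcard : ∀ i j, (A i ∩ P j).card ≤ (m + 1) / 2 := by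
    intro i j
    rw [hAj i j, hHcard i j]
    have := hm' i j
    omega
  have hBcard : ∀ i j, (B i ∩ P j).card ≤ (m + 1) / 2 := by
    intro i j
    rw [hBj i j, Finset.card_sdiff_of_subset (hHsub i j), hHcard i j]
    have := hm' i j
    omega
  -- the key reduction: it suffices to find a union of per-color-small subsets of the `C i`
  -- containing 0 in its convex hull
  have key : ∀ S : Fin (d + 1) → Finset (EuclideanSpace ℝ (Fin d)), (∀ i, S i ⊆ C i) →
      (∀ i j, (S i ∩ P j).card ≤ (m + 1) / 2) →
      (0 : (EuclideanSpace ℝ (Fin d))) ∈ convexHull ℝ ((Finset.univ.biUnion S : Finset (EuclideanSpace ℝ (Fin d))) : Set (EuclideanSpace ℝ (Fin d))) →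
      ∃ D : Finset (EuclideanSpace ℝ (Fin d)), D ⊆ Finset.univ.biUnion C ∧
        (0 : (EuclideanSpace ℝ (Fin d))) ∈ convexHull ℝ ((D : Finset (EuclideanSpace ℝ (Fin d))) : Set (EuclideanSpace ℝ (Fin d))) ∧
        ∀ j, (D ∩ P j).card ≤ (m + 1) / 2 := by
    intro S hS hScard hconv
    refine ⟨Finset.univ.biUnion S, ?_, hconv, ?_⟩
    · intro p hp
      rcases Finset.mem_biUnion.1 hp with ⟨i, -, hpi⟩
      exact Finset.mem_biUnion.2 ⟨i, Finset.mem_univ i, hS i hpi⟩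
    · intro j
      rcases Finset.eq_empty_or_nonempty (Finset.univ.biUnion S ∩ P j) with he | ⟨p, hp⟩
      · rw [he]; simp
      · rcases Finset.mem_inter.1 hp with ⟨hpD, hpP⟩
        rcases Finset.mem_biUnion.1 hpD with ⟨i₀, -, hpi₀⟩
        have hsub' : Finset.univ.biUnion S ∩ P j ⊆ S i₀ ∩ P j := by
          intro q hq
          rcases Finset.mem_inter.1 hq with ⟨hqD, hqP⟩
          rcases Finset.mem_biUnion.1 hqD with ⟨i₁, -, hqi₁⟩
          have : i₁ = i₀ := hone j i₁ i₀
            ⟨q, Finset.mem_inter.2 ⟨hS i₁ hqi₁, hqP⟩⟩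
            ⟨p, Finset.mem_inter.2 ⟨hS i₀ hpi₀, hpP⟩⟩
          exact Finset.mem_inter.2 ⟨this ▸ hqi₁, hqP⟩
        exact le_trans (Finset.card_le_card hsub') (hScard i₀ j)
  -- single-set version
  have key1 : ∀ (i : Fin (d + 1)) (S₀ : Finset (EuclideanSpace ℝ (Fin d))), S₀ ⊆ C i →
      (∀ j, (S₀ ∩ P j).card ≤ (m + 1) / 2) →
      (0 : (EuclideanSpace ℝ (Fin d))) ∈ convexHull ℝ ((S₀ : Finset (EuclideanSpace ℝ (Fin d))) : Set (EuclideanSpace ℝ (Fin d))) →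
      ∃ D : Finset (EuclideanSpace ℝ (Fin d)), D ⊆ Finset.univ.biUnion C ∧
        (0 : (EuclideanSpace ℝ (Fin d))) ∈ convexHull ℝ ((D : Finset (EuclideanSpace ℝ (Fin d))) : Set (EuclideanSpace ℝ (Fin d))) ∧
        ∀ j, (D ∩ P j).card ≤ (m + 1) / 2 := by
    intro i S₀ hS₀ hS₀card hconv
    refine key (fun k => if k = i then S₀ else ∅) ?_ ?_ ?_
    · intro k; by_cases hk : k = i <;> simp [hk, hS₀]
    · intro k j; by_cases hk : k = i <;> simp [hk, hS₀card j]
    · refine convexHull_mono ?_ hconv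
      intro p hp
      simp only [Finset.coe_biUnion, Finset.coe_univ, Set.mem_iUnion]
      exact ⟨i, trivial, by simp [hp]⟩
  -- sums over the two halves
  set α : Fin (d + 1) → ℝ := fun i => ∑ p ∈ A i, w i p with hα
  set s : Fin (d + 1) → (EuclideanSpace ℝ (Fin d)) := fun i => ∑ p ∈ A i, w i p • p with hs
  have hsplit1 : ∀ i, (∑ p ∈ B i, w i p) + (∑ p ∈ A i, w i p) = 1 := by
    intro i; rw [Finset.sum_sdiff (hAsub i)]; exact hw1 i
  have hsplit2 : ∀ i, (∑ p ∈ B i, w i p • p) + (∑ p ∈ A i, w i p • p) = 0 := by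
    intro i; rw [Finset.sum_sdiff (hAsub i)]; exact hws i
  have hα0 : ∀ i, 0 ≤ α i := fun i =>
    Finset.sum_nonneg fun p hp => hw0 i p (hAsub i hp)
  have hα1 : ∀ i, α i ≤ 1 := by
    intro i
    have h1 := hsplit1 i
    have : 0 ≤ ∑ p ∈ B i, w i p :=
      Finset.sum_nonneg fun p hp => hw0 i p (Finset.mem_sdiff.1 hp).1
    linarith
  -- degenerate case: all the weight on one half
  by_cases hdeg : ∃ i, α i = 0 ∨ α i = 1
  · rcases hdeg with ⟨i, hi | hi⟩
    · -- weight 0 on A i : use B i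
      have hz : ∀ p ∈ A i, w i p = 0 := by
        intro p hp
        exact (Finset.sum_eq_zero_iff_of_nonneg
          (fun q hq => hw0 i q (hAsub i hq))).1 hi p hp
      have hsz : s i = 0 := Finset.sum_eq_zero fun p hp => by rw [hz p hp, zero_smul]
      have hBsum : ∑ p ∈ B i, w i p = 1 := by
        have := hsplit1 i; rw [hα] at hi; simp only at hi; linarith [hi]
      have hBvec : ∑ p ∈ B i, w i p • p = 0 := by
        have h2 := hsplit2 i
        have : (∑ p ∈ A i, w i p • p) = 0 := hsz
        rw [this, add_zero] at h2; exact h2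
      refine key1 i (B i) (Finset.sdiff_subset) (fun j => hBcard i j) ?_
      exact Finset.mem_convexHull'.2 ⟨w i,
        fun q hq => hw0 i q (Finset.mem_sdiff.1 hq).1, hBsum, hBvec⟩
    · -- weight 0 on B i : use A i
      have hBsum0 : ∑ p ∈ B i, w i p = 0 := by
        have := hsplit1 i; rw [hα] at hi; simp only at hi; linarith [hi]
      have hz : ∀ p ∈ B i, w i p = 0 := by
        intro p hp
        exact (Finset.sum_eq_zero_iff_of_nonneg
          (fun q hq => hw0 i q (Finset.mem_sdiff.1 hq).1)).1 hBsum0 p hp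
      have hAvec : ∑ p ∈ A i, w i p • p = 0 := by
        have h2 := hsplit2 i
        have : (∑ p ∈ B i, w i p • p) = 0 :=
          Finset.sum_eq_zero fun p hp => by rw [hz p hp, zero_smul]
        rw [this, zero_add] at h2; exact h2
      refine key1 i (A i) (hAsub i) (fun j => hAcard i j) ?_
      exact Finset.mem_convexHull'.2 ⟨w i,
        fun q hq => hw0 i q (hAsub i hq), hi, hAvec⟩
  · push_neg at hdeg
    have hαpos : ∀ i, 0 < α i := fun i =>
      lt_of_le_of_ne (hα0 i) (Ne.symm (hdeg i).1)
    have hαlt : ∀ i, α i < 1 := fun i =>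
      lt_of_le_of_ne (hα1 i) ((hdeg i).2)
    -- d+1 vectors in ℝ^d are linearly dependent
    have hnli : ¬ LinearIndependent ℝ s := by
      intro hli
      have h1 : Fintype.card (Fin (d + 1)) ≤ Module.finrank ℝ (EuclideanSpace ℝ (Fin d)) :=
        hli.fintype_card_le_finrank
      rw [Fintype.card_fin] at h1
      have h2 : Module.finrank ℝ (EuclideanSpace ℝ (Fin d)) = d := finrank_euclideanSpace_fin
      omega
    rw [Fintype.not_linearIndependent_iff] at hnli
    obtain ⟨c, hc, i₀, hi₀⟩ := hnli
    -- choose the half according to the sign of c i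
    set S : Fin (d + 1) → Finset (EuclideanSpace ℝ (Fin d)) := fun i => if 0 ≤ c i then A i else B i with hS
    have hSsub : ∀ i, S i ⊆ C i := by
      intro i; rw [hS]; dsimp only
      split
      · exact hAsub i
      · exact Finset.sdiff_subset
    have hScard : ∀ i j, (S i ∩ P j).card ≤ (m + 1) / 2 := by
      intro i j; rw [hS]; dsimp only
      split
      · exact hAcard i j
      · exact hBcard i j
    refine key S hSsub hScard ?_
    -- the combined center of mass
    set t : Finset ((_ : Fin (d + 1)) × (EuclideanSpace ℝ (Fin d))) := Finset.univ.sigma S with ht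
    have hwt : ∀ x ∈ t, 0 ≤ |c x.1| * w x.1 x.2 := by
      rintro ⟨i, p⟩ hx
      have hp : p ∈ S i := (Finset.mem_sigma.1 hx).2
      exact mul_nonneg (abs_nonneg _) (hw0 i p (hSsub i hp))
    -- inner weighted-vector sums
    have hvec : ∀ i, ∑ p ∈ S i, (|c i| * w i p) • p = c i • s i := by
      intro i
      rw [hS]; dsimp only
      by_cases hci : 0 ≤ c i
      · rw [if_pos hci, abs_of_nonneg hci, hs]
        simp only [mul_smul, ← Finset.smul_sum]
      · rw [if_neg hci, abs_of_neg (lt_of_not_ge hci)]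
        have hBv : ∑ p ∈ B i, w i p • p = -(s i) :=
          eq_neg_of_add_eq_zero_left (hsplit2 i)
        calc ∑ p ∈ B i, (-c i * w i p) • p = (-c i) • ∑ p ∈ B i, w i p • p := by
              simp only [mul_smul, ← Finset.smul_sum]
          _ = (-c i) • (-(s i)) := by rw [hBv]
          _ = c i • s i := by rw [smul_neg, neg_smul, neg_neg]
    have hinner : ∀ i, ∑ p ∈ S i, |c i| * w i p = |c i| * (if 0 ≤ c i then α i else 1 - α i) := by
      intro i
      rw [← Finset.mul_sum, hS]; dsimp only
      by_cases hci : 0 ≤ c i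
      · rw [if_pos hci, if_pos hci]
      · rw [if_neg hci, if_neg hci]
        have h1 := hsplit1 i
        rw [hα]; dsimp only
        congr 1
        linarith
    have hsumpos : 0 < ∑ x ∈ t, |c x.1| * w x.1 x.2 := by
      rw [ht, Finset.sum_sigma]
      apply Finset.sum_pos'
      · intro i _
        exact Finset.sum_nonneg fun p hp =>
          mul_nonneg (abs_nonneg _) (hw0 i p (hSsub i hp))
      · refine ⟨i₀, Finset.mem_univ i₀, ?_⟩
        rw [hinner i₀]
        apply mul_pos (abs_pos.2 hi₀)
        split
        · exact hαpos i₀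
        · linarith [hαlt i₀]
    have hcm : t.centerMass (fun x => |c x.1| * w x.1 x.2) (fun x => x.2) = 0 := by
      rw [Finset.centerMass]
      have hv : ∑ x ∈ t, (|c x.1| * w x.1 x.2) • x.2 = 0 := by
        rw [ht, Finset.sum_sigma]
        calc ∑ i, ∑ p ∈ S i, (|c i| * w i p) • p = ∑ i, c i • s i := by
              exact Finset.sum_congr rfl fun i _ => hvec i
          _ = 0 := hc
      rw [hv, smul_zero]
    have := Finset.centerMass_mem_convexHull t hwt hsumpos
      (z := fun x => x.2)
      (s := ((Finset.univ.biUnion S : Finset (EuclideanSpace ℝ (Fin d))) : Set (EuclideanSpace ℝ (Fin d))))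
      (fun x hx => by
        rcases Finset.mem_sigma.1 hx with ⟨-, hx2⟩
        exact Finset.mem_coe.2 (Finset.mem_biUnion.2 ⟨x.1, Finset.mem_univ _, hx2⟩))
    rw [hcm] at this
    exact this
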